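/- arXiv:math/0603597 — 3 statements merged into one kernel-verified Lean document; each statement's English description precedes it below -/
import Mathlib

section
/- Let s > 1, K ⊆ ℝ^m compact and M > 0. For each multi-index γ ∈ ℤ₊^m let f_γ : ℝ^m → ℂ be continuous with support contained in K and |f_γ(x)| ≤ M for all γ and all x. Let (a_γ)_{γ∈ℤ₊^m} be complex numbers such that for every h > 0 there exists c > 0 with |a_γ| ≤ c·h^{|γ|}/(γ!)^{3s-1} for all γ. Let φ ∈ S^{(s)}. For ε ∈ (0,1), a multi-index α and x ∈ ℝ^m set u_{α,ε}(x) = Σ_γ a_γ·(−1)^{|γ|}·ε^{−|γ|−|α|}·∫ f_γ(x+εy)·∂^{γ+α}φ(y) dy. Then each such series converges absolutely, and there exist k₁ > 0 and C > 0 such that |u_{α,ε}(x)| ≤ C·(α!)^{3s-1}·exp(k₁·ε^{−1/(2s-1)}) for all multi-indices α, all x ∈ ℝ^m and all ε ∈ (0,1). (This says that the net ((Σ_γ a_γ D^γ f_γ) * φ_ε)_ε, with D^γ = (−i)^{|γ|}∂^γ, satisfies the s-moderate bounds, which is the key estimate in embedding the compactly supported Gevrey ultradistributions of order 3s−1 into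 the algebra of generalized Gevrey ultradistributions of order s.) -/
set_option maxHeartbeats 2000000


open MeasureTheory Pointwise

noncomputable def pd (m : ℕ) (j : Fin m) (f : (Fin m → ℝ) → ℂ) : (Fin m → ℝ) → ℂ :=
  fun x => fderiv ℝ f x (Pi.single j 1)

/-- Iterated partial derivative `∂^α` associated with a multi-index `α ∈ ℤ₊^m`. -/
noncomputable def pdm (m : ℕ) (α : Fin m → ℕ) (f : (Fin m → ℝ) → ℂ) : (Fin m → ℝ) → ℂ :=
  (List.finRange m).foldr (fun j g => (pd m j)^[α j] g) f

/-- `|α| = α₁ + ⋯ + α_m` for a multi-index. -/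
def msize {m : ℕ} (α : Fin m → ℕ) : ℕ := ∑ i, α i

/-- `α! = α₁! ⋯ α_m!` for a multi-index. -/
def mfact {m : ℕ} (α : Fin m → ℕ) : ℕ := ∏ i, Nat.factorial (α i)

/-- Euclidean norm on `ℝ^m` realized as `Fin m → ℝ`. -/
noncomputable def eunorm {m : ℕ} (x : Fin m → ℝ) : ℝ := Real.sqrt (∑ i, (x i) ^ 2)

/-- `x^α = x₁^{α₁} ⋯ x_m^{α_m}`. -/
def mpow {m : ℕ} (α : Fin m → ℕ) (x : Fin m → ℝ) : ℝ := ∏ i, x i ^ α i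

/-- Membership in the Gelfand–Shilov space `S^{(s)}`: `φ` is smooth and
`σ_{b,s}(φ) = sup_{α,β} ∫ (|x|^{|β|} / (b^{|α+β|} (α!)^s (β!)^s)) |∂^α φ(x)| dx < ∞`
for every `b > 0`. -/
def InGS (m : ℕ) (s : ℝ) (φ : (Fin m → ℝ) → ℂ) : Prop :=
  ContDiff ℝ (⊤ : ℕ∞) φ ∧ ∀ b > (0:ℝ), ∃ B : ℝ, ∀ α β : Fin m → ℕ,
    (∫⁻ x : Fin m → ℝ, ENNReal.ofReal
      ((eunorm x ^ (msize β) / (b ^ (msize (α + β)) * (mfact α : ℝ) ^ s * (mfact β : ℝ) ^ s)) *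
        Norm.norm (pdm m α φ x))) ≤ ENNReal.ofReal B

/-! ### auxiliary lemmas -/

lemma pi_summable (m : ℕ) (g : ℕ → ℝ) (hg0 : ∀ n, 0 ≤ g n) (hg : Summable g) :
    Summable (fun γ : Fin m → ℕ => ∏ i, g (γ i)) ∧
      (∑' γ : Fin m → ℕ, ∏ i, g (γ i)) = (∑' n, g n) ^ m := by
  induction m with
  | zero =>
    constructor
    · exact summable_of_finite_support (Set.toFinite _)
    · simp [tsum_eq_single (fun i : Fin 0 => 0) (fun b hb => absurd (funext fun i => i.elim0) hb)]
  | succ m ih =>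
    obtain ⟨ihs, iht⟩ := ih
    have key : ∀ γ : Fin (m+1) → ℕ, ∏ i, g (γ i) =
        (fun p : ℕ × (Fin m → ℕ) => g p.1 * ∏ i, g (p.2 i)) ((Fin.consEquiv fun _ => ℕ).symm γ) := by
      intro γ
      simp [Fin.consEquiv, Fin.prod_univ_succ, Fin.tail]
    have hP0 : (0 : (Fin m → ℕ) → ℝ) ≤ fun γ : Fin m → ℕ => ∏ i, g (γ i) :=
      Pi.le_def.mpr fun γ => Finset.prod_nonneg fun i _ => hg0 _
    have hg0' : (0 : ℕ → ℝ) ≤ g := Pi.le_def.mpr hg0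
    have hsum : Summable (fun p : ℕ × (Fin m → ℕ) => g p.1 * ∏ i, g (p.2 i)) :=
      Summable.mul_of_nonneg (f := g) (g := fun γ : Fin m → ℕ => ∏ i, g (γ i)) hg ihs hg0' hP0
    constructor
    · have := hsum.comp_injective (Fin.consEquiv fun _ => ℕ).symm.injective
      refine this.congr fun γ => (key γ).symm
    · have h1 : (∑' γ : Fin (m+1) → ℕ, ∏ i, g (γ i)) =
          ∑' p : ℕ × (Fin m → ℕ), g p.1 * ∏ i, g (p.2 i) := by
        rw [← (Fin.consEquiv fun _ => ℕ).symm.tsum_eq]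
        exact tsum_congr key
      rw [h1, ← Summable.tsum_mul_tsum hg ihs hsum, iht, pow_succ, mul_comm]

lemma key1 {σ t : ℝ} (hσ : 0 < σ) (ht : 0 ≤ t) (n : ℕ) :
    t ^ n ≤ (n.factorial : ℝ) ^ σ * Real.exp (σ * t ^ (1/σ)) := by
  have hx : (0:ℝ) ≤ t ^ (1/σ) := Real.rpow_nonneg ht _
  have h1 : (t ^ (1/σ)) ^ n ≤ (n.factorial : ℝ) * Real.exp (t ^ (1/σ)) := by
    have := Real.pow_div_factorial_le_exp (t ^ (1/σ)) hx n
    rw [div_le_iff₀ (by positivity)] at this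
    linarith [this]
  have h2 : ((t ^ (1/σ)) ^ n) ^ σ ≤ ((n.factorial : ℝ) * Real.exp (t ^ (1/σ))) ^ σ :=
    Real.rpow_le_rpow (by positivity) h1 hσ.le
  have h3 : ((t ^ (1/σ)) ^ n) ^ σ = t ^ n := by
    rw [← Real.rpow_natCast (t ^ (1/σ)) n, ← Real.rpow_mul ht, ← Real.rpow_mul ht,
      ← Real.rpow_natCast t n]
    congr 1
    field_simp
  have h4 : ((n.factorial : ℝ) * Real.exp (t ^ (1/σ))) ^ σ
      = (n.factorial : ℝ) ^ σ * Real.exp (σ * t ^ (1/σ)) := by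
    rw [Real.mul_rpow (by positivity) (Real.exp_nonneg _), ← Real.exp_mul, mul_comm (t ^ (1/σ)) σ]
  rw [h3, h4] at h2
  exact h2

lemma key2 {σ u : ℝ} (hσ : 0 < σ) (hu : 0 ≤ u) (n : ℕ) :
    u ^ n * ((n.factorial : ℝ)) ^ (-σ) ≤
      Real.exp (σ * (2*u) ^ (1/σ)) * (2⁻¹ : ℝ) ^ n := by
  have hf : (0:ℝ) < (n.factorial : ℝ) := by exact_mod_cast n.factorial_pos
  have h := key1 hσ (by positivity : (0:ℝ) ≤ 2*u) n
  rw [mul_pow] at h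
  have hstep : u ^ n ≤ (n.factorial : ℝ) ^ σ * Real.exp (σ * (2*u) ^ (1/σ)) * (2⁻¹:ℝ) ^ n := by
    have h2 : (0:ℝ) < (2:ℝ) ^ n := by positivity
    have h' : u ^ n ≤ ((n.factorial : ℝ) ^ σ * Real.exp (σ * (2*u) ^ (1/σ))) / 2 ^ n :=
      (le_div_iff₀ h2).mpr (by linarith [h])
    simpa [div_eq_mul_inv, inv_pow] using h'
  calc u ^ n * ((n.factorial : ℝ)) ^ (-σ)
      ≤ ((n.factorial : ℝ) ^ σ * Real.exp (σ * (2*u) ^ (1/σ)) * (2⁻¹:ℝ) ^ n) *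
          ((n.factorial : ℝ)) ^ (-σ) := by
        exact mul_le_mul_of_nonneg_right hstep (Real.rpow_nonneg hf.le _)
    _ = Real.exp (σ * (2*u) ^ (1/σ)) * (2⁻¹ : ℝ) ^ n := by
        have hfac : (n.factorial : ℝ) ^ σ * (n.factorial : ℝ) ^ (-σ) = 1 := by
          rw [← Real.rpow_add hf]; simp
        calc ((n.factorial : ℝ) ^ σ * Real.exp (σ * (2*u) ^ (1/σ)) * (2⁻¹:ℝ) ^ n) *
              ((n.factorial : ℝ)) ^ (-σ)
            = ((n.factorial : ℝ) ^ σ * (n.factorial : ℝ) ^ (-σ)) *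
                (Real.exp (σ * (2*u) ^ (1/σ)) * (2⁻¹:ℝ) ^ n) := by ring
          _ = Real.exp (σ * (2*u) ^ (1/σ)) * (2⁻¹ : ℝ) ^ n := by rw [hfac, one_mul]

lemma pow_rpow_swap (x : ℝ) (hx : 0 ≤ x) (n : ℕ) (s : ℝ) : (x ^ n) ^ s = (x ^ s) ^ n := by
  rw [← Real.rpow_natCast x n, ← Real.rpow_mul hx, mul_comm, Real.rpow_mul hx,
    Real.rpow_natCast]

lemma mfact_pos {m : ℕ} (α : Fin m → ℕ) : 0 < mfact α :=
  Finset.prod_pos fun _ _ => Nat.factorial_pos _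

lemma mfact_real_pos {m : ℕ} (α : Fin m → ℕ) : (0:ℝ) < (mfact α : ℝ) := by
  exact_mod_cast mfact_pos α

lemma nat_fac_add_le (a b : ℕ) : (a+b).factorial ≤ 2^(a+b) * (a.factorial * b.factorial) := by
  have h1 := Nat.add_choose_mul_factorial_mul_factorial a b
  have h2 : (a+b).choose b ≤ 2^(a+b) :=
    calc (a+b).choose b ≤ ∑ i ∈ Finset.range (a+b+1), (a+b).choose i :=
          Finset.single_le_sum (fun i _ => Nat.zero_le _) (Finset.mem_range.mpr (by omega))
      _ = 2^(a+b) := Nat.sum_range_choose _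
  calc (a+b).factorial = (a+b).choose b * a.factorial * b.factorial := h1.symm
    _ ≤ 2^(a+b) * a.factorial * b.factorial :=
        Nat.mul_le_mul_right _ (Nat.mul_le_mul_right _ h2)
    _ = 2^(a+b) * (a.factorial * b.factorial) := by ring

lemma msize_add {m : ℕ} (γ α : Fin m → ℕ) : msize (γ + α) = msize γ + msize α := by
  simp [msize, Finset.sum_add_distrib]

lemma mfact_add_le {m : ℕ} (γ α : Fin m → ℕ) :
    mfact (γ + α) ≤ 2 ^ (msize γ + msize α) * (mfact γ * mfact α) := by
  unfold mfact
  calc (∏ i, ((γ + α) i).factorial)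
      ≤ ∏ i, (2 ^ (γ i + α i) * ((γ i).factorial * (α i).factorial)) := by
        refine Finset.prod_le_prod (fun i _ => Nat.zero_le _) (fun i _ => ?_)
        exact nat_fac_add_le (γ i) (α i)
    _ = 2 ^ (msize γ + msize α) * (mfact γ * mfact α) := by
        rw [Finset.prod_mul_distrib, Finset.prod_mul_distrib, Finset.prod_pow_eq_pow_sum]
        unfold mfact msize
        rw [← Finset.sum_add_distrib]

/-- key3: `u^{|α|} ≤ (α!)^σ exp(σ u^{1/σ})^m`. -/
lemma key3 {σ u : ℝ} (hσ : 0 < σ) (hu : 0 ≤ u) {m : ℕ} (α : Fin m → ℕ) :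
    u ^ (msize α) ≤ (mfact α : ℝ) ^ σ * Real.exp (σ * u ^ (1/σ)) ^ m := by
  unfold msize
  rw [← Finset.prod_pow_eq_pow_sum]
  calc (∏ i, u ^ (α i))
      ≤ ∏ i, (((α i).factorial : ℝ) ^ σ * Real.exp (σ * u ^ (1/σ))) := by
        refine Finset.prod_le_prod (fun i _ => by positivity) (fun i _ => key1 hσ hu (α i))
    _ = (mfact α : ℝ) ^ σ * Real.exp (σ * u ^ (1/σ)) ^ m := by
        rw [Finset.prod_mul_distrib, Finset.prod_const, Finset.card_univ, Fintype.card_fin,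
          Real.finset_prod_rpow _ _ (fun i _ => by positivity) σ]
        congr 2
        unfold mfact
        push_cast
        rfl
lemma pd_contDiff {m : ℕ} {f : (Fin m → ℝ) → ℂ} (hf : ContDiff ℝ (⊤ : ℕ∞) f) (j : Fin m) :
    ContDiff ℝ (⊤ : ℕ∞) (pd m j f) :=
  (hf.fderiv_right (m := (⊤ : ℕ∞)) (by simp)).clm_apply contDiff_const

lemma pdm_contDiff {m : ℕ} {f : (Fin m → ℝ) → ℂ} (hf : ContDiff ℝ (⊤ : ℕ∞) f)
    (α : Fin m → ℕ) : ContDiff ℝ (⊤ : ℕ∞) (pdm m α f) := by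
  unfold pdm
  induction (List.finRange m) with
  | nil => exact hf
  | cons j l ih =>
    simp only [List.foldr_cons]
    induction (α j) with
    | zero => simpa using ih
    | succ n ihn =>
      rw [Function.iterate_succ']
      exact pd_contDiff ihn j


lemma GS_bound {m : ℕ} {s : ℝ} {φ : (Fin m → ℝ) → ℂ} (hφ : InGS m s φ) :
    ∃ B : ℝ, 1 ≤ B ∧ ∀ δ : Fin m → ℕ,
      Integrable (pdm m δ φ) ∧
        (∫ y : Fin m → ℝ, ‖pdm m δ φ y‖) ≤ B * (mfact δ : ℝ) ^ s := by
  obtain ⟨B₀, hB₀⟩ := hφ.2 1 one_pos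
  refine ⟨max B₀ 1, le_max_right _ _, fun δ => ?_⟩
  have hmeas : AEStronglyMeasurable (pdm m δ φ) volume :=
    ((pdm_contDiff hφ.1 δ).continuous).aestronglyMeasurable
  set Fδ : ℝ := (mfact δ : ℝ) ^ s with hFδ
  have hFδpos : 0 < Fδ := Real.rpow_pos_of_pos (by exact_mod_cast mfact_pos δ) s
  have h0 := hB₀ δ 0
  have heq : ∀ x : Fin m → ℝ,
      (eunorm x ^ (msize (0 : Fin m → ℕ)) /
        ((1:ℝ) ^ (msize (δ + 0)) * (mfact δ : ℝ) ^ s * ((mfact (0 : Fin m → ℕ)) : ℝ) ^ s)) *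
        Norm.norm (pdm m δ φ x) = Fδ⁻¹ * Norm.norm (pdm m δ φ x) := by
    intro x
    have h1 : msize (0 : Fin m → ℕ) = 0 := by simp [msize]
    have h2 : mfact (0 : Fin m → ℕ) = 1 := by simp [mfact]
    rw [h1, h2]
    simp [one_div, hFδ]
  rw [show (fun x : Fin m → ℝ => ENNReal.ofReal
      ((eunorm x ^ (msize (0 : Fin m → ℕ)) /
        ((1:ℝ) ^ (msize (δ + 0)) * (mfact δ : ℝ) ^ s * ((mfact (0 : Fin m → ℕ)) : ℝ) ^ s)) *
        Norm.norm (pdm m δ φ x))) =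
      (fun x : Fin m → ℝ => ENNReal.ofReal (Fδ⁻¹ * Norm.norm (pdm m δ φ x))) from
    funext fun x => by rw [heq x]] at h0
  have hmain : (∫⁻ x : Fin m → ℝ, ENNReal.ofReal (Norm.norm (pdm m δ φ x))) ≤
      ENNReal.ofReal (Fδ * max B₀ 1) := by
    have e1 : ∀ x : Fin m → ℝ, ENNReal.ofReal (Norm.norm (pdm m δ φ x)) =
        ENNReal.ofReal Fδ * ENNReal.ofReal (Fδ⁻¹ * Norm.norm (pdm m δ φ x)) := by
      intro x
      rw [← ENNReal.ofReal_mul hFδpos.le, ← mul_assoc, mul_inv_cancel₀ hFδpos.ne', one_mul]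
    calc (∫⁻ x : Fin m → ℝ, ENNReal.ofReal (Norm.norm (pdm m δ φ x)))
        = ENNReal.ofReal Fδ * ∫⁻ x : Fin m → ℝ,
            ENNReal.ofReal (Fδ⁻¹ * Norm.norm (pdm m δ φ x)) := by
          rw [← lintegral_const_mul' _ _ ENNReal.ofReal_ne_top]
          exact lintegral_congr e1
      _ ≤ ENNReal.ofReal Fδ * ENNReal.ofReal B₀ := by
          exact mul_le_mul_right h0 _
      _ ≤ ENNReal.ofReal (Fδ * max B₀ 1) := by
          rw [ENNReal.ofReal_mul hFδpos.le]
          exact mul_le_mul_right (ENNReal.ofReal_le_ofReal (le_max_left _ _)) _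
  have hnorm : ∀ x : Fin m → ℝ, ‖pdm m δ φ x‖ₑ =
      ENNReal.ofReal (Norm.norm (pdm m δ φ x)) := by
    intro x
    rw [ofReal_norm]
  have hint : Integrable (pdm m δ φ) := by
    refine ⟨hmeas, ?_⟩
    rw [HasFiniteIntegral]
    calc (∫⁻ x, ‖pdm m δ φ x‖ₑ) =
        ∫⁻ x, ENNReal.ofReal (Norm.norm (pdm m δ φ x)) := lintegral_congr hnorm
      _ ≤ ENNReal.ofReal (Fδ * max B₀ 1) := hmain
      _ < ⊤ := ENNReal.ofReal_lt_top
  refine ⟨hint, ?_⟩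
  rw [integral_norm_eq_lintegral_enorm hmeas]
  rw [mul_comm]
  refine ENNReal.toReal_le_of_le_ofReal (by positivity) ?_
  calc (∫⁻ x, ‖pdm m δ φ x‖ₑ) =
      ∫⁻ x, ENNReal.ofReal (Norm.norm (pdm m δ φ x)) := lintegral_congr hnorm
    _ ≤ ENNReal.ofReal (Fδ * max B₀ 1) := hmain

lemma prod_env {m : ℕ} (u s : ℝ) (hu : 0 ≤ u) (γ : Fin m → ℕ) :
    (∏ i, (u ^ (γ i) * (((γ i).factorial : ℝ)) ^ (-(2*s-1)))) =
      u ^ (msize γ) * (mfact γ : ℝ) ^ (-(2*s-1)) := by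
  rw [Finset.prod_mul_distrib, Finset.prod_pow_eq_pow_sum,
    Real.finset_prod_rpow _ _ (fun i _ => by positivity) _]
  unfold msize mfact
  congr 2
  push_cast
  rfl

lemma real_chain {s c M B ε : ℝ} (hs : 1 < s) (hc : 0 < c) (hM : 0 < M) (hB : 0 < B)
    (hε : 0 < ε) {m : ℕ} (γ α : Fin m → ℕ) {A I : ℝ}
    (hA : A ≤ c / (mfact γ : ℝ) ^ (3*s-1)) (hA0 : 0 ≤ A)
    (hI : I ≤ M * (B * (mfact (γ+α) : ℝ) ^ s)) (hI0 : 0 ≤ I) :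
    A * ((ε ^ (msize γ + msize α))⁻¹ * I) ≤
      (c * M * B * ((mfact α : ℝ) ^ s * ((2:ℝ)^s * ε⁻¹) ^ (msize α))) *
        ∏ i, (((2:ℝ)^s * ε⁻¹) ^ (γ i) * (((γ i).factorial : ℝ)) ^ (-(2*s-1))) := by
  have hs0 : (0:ℝ) < s := by linarith
  have hmfγ : (0:ℝ) < (mfact γ : ℝ) := mfact_real_pos γ
  have hmfα : (0:ℝ) < (mfact α : ℝ) := mfact_real_pos α
  have hεp : (0:ℝ) < (ε ^ (msize γ + msize α))⁻¹ := by positivity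
  have hu : (0:ℝ) ≤ (2:ℝ)^s * ε⁻¹ := by positivity
  -- step 2 : factorial bound
  have step2 : (mfact (γ+α) : ℝ) ^ s ≤
      ((2:ℝ)^s) ^ (msize γ) * (((2:ℝ)^s) ^ (msize α) * ((mfact γ:ℝ)^s * (mfact α:ℝ)^s)) := by
    have hle : ((mfact (γ+α) : ℕ) : ℝ) ≤
        ((2 ^ (msize γ + msize α) * (mfact γ * mfact α) : ℕ) : ℝ) := by
      exact_mod_cast mfact_add_le γ α
    have h := Real.rpow_le_rpow (by positivity) hle hs0.le
    calc (mfact (γ+α) : ℝ) ^ s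
        ≤ (((2:ℕ) ^ (msize γ + msize α) * (mfact γ * mfact α) : ℕ) : ℝ) ^ s := by
          exact_mod_cast h
      _ = ((2:ℝ)^s) ^ (msize γ) * (((2:ℝ)^s) ^ (msize α) * ((mfact γ:ℝ)^s * (mfact α:ℝ)^s)) := by
          push_cast
          rw [Real.mul_rpow (by positivity) (by positivity),
            Real.mul_rpow (by positivity) (by positivity),
            pow_rpow_swap 2 (by norm_num) _ s, pow_add]
          ring
  -- step 1 : multiply bounds
  have step1 : A * ((ε ^ (msize γ + msize α))⁻¹ * I) ≤
      (c / (mfact γ : ℝ) ^ (3*s-1)) * ((ε ^ (msize γ + msize α))⁻¹ *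
        (M * (B * (((2:ℝ)^s) ^ (msize γ) * (((2:ℝ)^s) ^ (msize α) *
          ((mfact γ:ℝ)^s * (mfact α:ℝ)^s)))))) := by
    have hI' : I ≤ M * (B * (((2:ℝ)^s) ^ (msize γ) * (((2:ℝ)^s) ^ (msize α) *
        ((mfact γ:ℝ)^s * (mfact α:ℝ)^s)))) := by
      refine hI.trans ?_
      exact mul_le_mul_of_nonneg_left (mul_le_mul_of_nonneg_left step2 hB.le) hM.le
    refine mul_le_mul hA (mul_le_mul_of_nonneg_left hI' hεp.le) (by positivity) ?_
    positivity
  refine step1.trans_eq ?_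
  rw [prod_env _ s hu γ]
  -- now a pure algebraic identity
  have hrw : (mfact γ : ℝ) ^ (-(2*s-1)) = (mfact γ:ℝ)^s / (mfact γ:ℝ)^(3*s-1) := by
    rw [← Real.rpow_sub hmfγ]
    congr 1
    ring
  rw [hrw, mul_pow, mul_pow, ← inv_pow, pow_add]
  have h1 : (mfact γ : ℝ) ^ (3*s-1) ≠ 0 := by positivity
  have h2 : (ε:ℝ) ≠ 0 := ne_of_gt hε
  field_simp

lemma final_step {s ε : ℝ} {m : ℕ} (hm : 0 < m) (hs : 1 < s) (hε : 0 < ε)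
    {c M B : ℝ} (hc : 0 < c) (hM : 0 < M) (hB : 0 < B) (α : Fin m → ℕ) :
    (c * M * B * ((mfact α : ℝ) ^ s * ((2:ℝ)^s * ε⁻¹) ^ (msize α))) *
      (Real.exp ((2*s-1) * (2*((2:ℝ)^s * ε⁻¹)) ^ (1/(2*s-1))) * 2) ^ m ≤
    (c * M * B * 2^m) * (mfact α : ℝ) ^ (3*s-1) *
      Real.exp ((2*(m:ℝ)*(2*s-1)*((2:ℝ)^(s+1)) ^ (1/(2*s-1))) * ε ^ (-1/(2*s-1))) := by
  have hσ : (0:ℝ) < 2*s-1 := by linarith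
  have hu : (0:ℝ) < (2:ℝ)^s * ε⁻¹ := by positivity
  have hW : (0:ℝ) ≤ ε ^ (-1/(2*s-1)) := Real.rpow_nonneg hε.le _
  have hK : (0:ℝ) < ((2:ℝ)^(s+1)) ^ (1/(2*s-1)) :=
    Real.rpow_pos_of_pos (Real.rpow_pos_of_pos two_pos _) _
  set u : ℝ := (2:ℝ)^s * ε⁻¹ with hudef
  set K : ℝ := ((2:ℝ)^(s+1)) ^ (1/(2*s-1)) with hKdef
  set W : ℝ := ε ^ (-1/(2*s-1)) with hWdef
  have h2u : 2*u = (2:ℝ)^(s+1) * ε⁻¹ := by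
    rw [hudef, Real.rpow_add_one two_ne_zero]
    ring
  have hKW : (2*u) ^ (1/(2*s-1)) = K * W := by
    rw [h2u, Real.mul_rpow (by positivity) (by positivity), Real.inv_rpow hε.le,
      ← Real.rpow_neg hε.le, hKdef, hWdef]
    congr 1
    ring
  have huW : u ^ (1/(2*s-1)) ≤ K * W := by
    rw [← hKW]
    exact Real.rpow_le_rpow hu.le (by linarith) (by positivity)
  have hexp1 : Real.exp ((2*s-1) * u ^ (1/(2*s-1))) ≤ Real.exp ((2*s-1) * (K*W)) :=
    Real.exp_le_exp.mpr (mul_le_mul_of_nonneg_left huW hσ.le)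
  have hkey3 : u ^ (msize α) ≤
      (mfact α : ℝ) ^ (2*s-1) * Real.exp ((2*s-1) * (K*W)) ^ m := by
    refine (key3 hσ hu.le α).trans ?_
    exact mul_le_mul_of_nonneg_left (pow_le_pow_left₀ (Real.exp_nonneg _) hexp1 m)
      (Real.rpow_nonneg (mfact_real_pos α).le _)
  have hmfα := mfact_real_pos α
  calc (c * M * B * ((mfact α : ℝ) ^ s * u ^ (msize α))) *
        (Real.exp ((2*s-1) * (2*u) ^ (1/(2*s-1))) * 2) ^ m
      = (c * M * B * ((mfact α : ℝ) ^ s * u ^ (msize α))) *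
        (Real.exp ((2*s-1) * (K*W)) * 2) ^ m := by rw [hKW]
    _ ≤ (c * M * B * ((mfact α : ℝ) ^ s *
          ((mfact α : ℝ) ^ (2*s-1) * Real.exp ((2*s-1) * (K*W)) ^ m))) *
        (Real.exp ((2*s-1) * (K*W)) * 2) ^ m := by
        refine mul_le_mul_of_nonneg_right (mul_le_mul_of_nonneg_left ?_ (by positivity)) ?_
        · exact mul_le_mul_of_nonneg_left hkey3 (Real.rpow_nonneg hmfα.le _)
        · positivity
    _ = (c * M * B * 2^m) * ((mfact α : ℝ) ^ s * (mfact α : ℝ) ^ (2*s-1)) *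
          (Real.exp ((2*s-1) * (K*W)) ^ (2*m)) := by
        rw [mul_pow]
        ring
    _ = (c * M * B * 2^m) * (mfact α : ℝ) ^ (3*s-1) *
          Real.exp ((2*(m:ℝ)*(2*s-1)*K) * W) := by
        rw [← Real.rpow_add hmfα, ← Real.exp_nat_mul]
        congr 2
        · ring
        · push_cast
          ring

/-- moderateness estimate for the regularization
`(Σ_γ a_γ D^γ f_γ) * φ_ε` of a compactly supported Gevrey ultradistribution of
order `3s-1`. -/
theorem embedding_estimate (m : ℕ) (hm : 0 < m) (s : ℝ) (hs : 1 < s)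
    (K : Set (Fin m → ℝ)) (hK : IsCompact K) (M : ℝ) (hM : 0 < M)
    (f : (Fin m → ℕ) → (Fin m → ℝ) → ℂ)
    (hfc : ∀ γ : Fin m → ℕ, Continuous (f γ))
    (hfsupp : ∀ γ : Fin m → ℕ, tsupport (f γ) ⊆ K)
    (hfM : ∀ (γ : Fin m → ℕ) (x : Fin m → ℝ), Norm.norm (f γ x) ≤ M)
    (a : (Fin m → ℕ) → ℂ)
    (ha : ∀ h > (0:ℝ), ∃ c > (0:ℝ), ∀ γ : Fin m → ℕ,
      Norm.norm (a γ) ≤ c * h ^ (msize γ) / (mfact γ : ℝ) ^ (3 * s - 1))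
    (φ : (Fin m → ℝ) → ℂ) (hφ : InGS m s φ) :
    (∀ (α : Fin m → ℕ) (x : Fin m → ℝ), ∀ ε ∈ Set.Ioo (0:ℝ) 1,
      Summable fun γ : Fin m → ℕ =>
        Norm.norm (a γ * (-1 : ℂ) ^ (msize γ) * (((ε ^ (msize γ + msize α) : ℝ) : ℂ))⁻¹ *
          ∫ y : Fin m → ℝ, f γ (x + ε • y) * pdm m (γ + α) φ y)) ∧
    ∃ k₁ > (0:ℝ), ∃ C > (0:ℝ), ∀ (α : Fin m → ℕ) (x : Fin m → ℝ), ∀ ε ∈ Set.Ioo (0:ℝ) 1,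
      Norm.norm (∑' γ : Fin m → ℕ,
          a γ * (-1 : ℂ) ^ (msize γ) * (((ε ^ (msize γ + msize α) : ℝ) : ℂ))⁻¹ *
            ∫ y : Fin m → ℝ, f γ (x + ε • y) * pdm m (γ + α) φ y) ≤
        C * (mfact α : ℝ) ^ (3 * s - 1) * Real.exp (k₁ * ε ^ (-1 / (2 * s - 1))) := by
  have hs0 : (0:ℝ) < s := by linarith
  have hσ : (0:ℝ) < 2*s-1 := by linarith
  obtain ⟨B, hB1, hB⟩ := GS_bound hφ
  have hB0 : (0:ℝ) < B := by linarith
  obtain ⟨c, hc, hca⟩ := ha 1 one_pos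
  have hca' : ∀ γ : Fin m → ℕ, Norm.norm (a γ) ≤ c / (mfact γ : ℝ) ^ (3*s-1) := fun γ => by
    simpa using hca γ
  -- integral bound
  have hIb : ∀ (δ : Fin m → ℕ) (x : Fin m → ℝ) (ε : ℝ) (γ : Fin m → ℕ),
      ‖∫ y : Fin m → ℝ, f γ (x + ε • y) * pdm m δ φ y‖ ≤ M * (B * (mfact δ : ℝ) ^ s) := by
    intro δ x ε γ
    calc ‖∫ y : Fin m → ℝ, f γ (x + ε • y) * pdm m δ φ y‖
        ≤ ∫ y : Fin m → ℝ, ‖f γ (x + ε • y) * pdm m δ φ y‖ := norm_integral_le_integral_norm _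
      _ ≤ ∫ y : Fin m → ℝ, M * ‖pdm m δ φ y‖ := by
          refine integral_mono_of_nonneg (Filter.Eventually.of_forall fun y => norm_nonneg _)
            (((hB δ).1.norm).const_mul M) (Filter.Eventually.of_forall fun y => ?_)
          show ‖f γ (x + ε • y) * pdm m δ φ y‖ ≤ M * ‖pdm m δ φ y‖
          rw [norm_mul]
          refine mul_le_mul_of_nonneg_right ?_ (norm_nonneg _)
          exact hfM γ _
      _ = M * ∫ y : Fin m → ℝ, ‖pdm m δ φ y‖ := integral_const_mul _ _
      _ ≤ M * (B * (mfact δ : ℝ) ^ s) := mul_le_mul_of_nonneg_left (hB δ).2 hM.le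
  -- decomposition of the absolute value of a term
  have habs : ∀ (α γ : Fin m → ℕ) (x : Fin m → ℝ) (ε : ℝ), 0 < ε →
      Norm.norm (a γ * (-1 : ℂ) ^ (msize γ) * (((ε ^ (msize γ + msize α) : ℝ) : ℂ))⁻¹ *
          ∫ y : Fin m → ℝ, f γ (x + ε • y) * pdm m (γ + α) φ y) =
        Norm.norm (a γ) * ((ε ^ (msize γ + msize α))⁻¹ *
          ‖∫ y : Fin m → ℝ, f γ (x + ε • y) * pdm m (γ + α) φ y‖) := by
    intro α γ x ε hε
    rw [norm_mul, norm_mul, norm_mul, norm_pow, norm_inv, Complex.norm_real, Real.norm_eq_abs,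
      abs_of_pos (pow_pos hε _)]
    simp [mul_assoc]
  -- termwise bound by the envelope
  have hterm : ∀ (α : Fin m → ℕ) (x : Fin m → ℝ) (ε : ℝ), ε ∈ Set.Ioo (0:ℝ) 1 →
      ∀ γ : Fin m → ℕ,
      Norm.norm (a γ * (-1 : ℂ) ^ (msize γ) * (((ε ^ (msize γ + msize α) : ℝ) : ℂ))⁻¹ *
          ∫ y : Fin m → ℝ, f γ (x + ε • y) * pdm m (γ + α) φ y) ≤
        (c * M * B * ((mfact α : ℝ) ^ s * ((2:ℝ)^s * ε⁻¹) ^ (msize α))) *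
          ∏ i, (((2:ℝ)^s * ε⁻¹) ^ (γ i) * (((γ i).factorial : ℝ)) ^ (-(2*s-1))) := by
    intro α x ε hε γ
    rw [habs α γ x ε hε.1]
    exact real_chain hs hc hM hB0 hε.1 γ α (hca' γ) (norm_nonneg _)
      (hIb (γ+α) x ε γ) (norm_nonneg _)
  -- envelope, per ε
  have henvelope : ∀ (α : Fin m → ℕ) (x : Fin m → ℝ) (ε : ℝ), ε ∈ Set.Ioo (0:ℝ) 1 →
      ∀ γ : Fin m → ℕ,
      Norm.norm (a γ * (-1 : ℂ) ^ (msize γ) * (((ε ^ (msize γ + msize α) : ℝ) : ℂ))⁻¹ *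
          ∫ y : Fin m → ℝ, f γ (x + ε • y) * pdm m (γ + α) φ y) ≤
        (c * M * B * ((mfact α : ℝ) ^ s * ((2:ℝ)^s * ε⁻¹) ^ (msize α))) *
          ∏ i, (Real.exp ((2*s-1) * (2*((2:ℝ)^s * ε⁻¹)) ^ (1/(2*s-1))) * (2⁻¹:ℝ) ^ (γ i)) := by
    intro α x ε hε γ
    have hu0 : (0:ℝ) ≤ (2:ℝ)^s * ε⁻¹ :=
      mul_nonneg (Real.rpow_nonneg (by norm_num) s) (inv_nonneg.2 hε.1.le)
    have hD0 : (0:ℝ) ≤ c * M * B * ((mfact α : ℝ) ^ s * ((2:ℝ)^s * ε⁻¹) ^ (msize α)) :=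
      mul_nonneg (mul_nonneg (mul_nonneg hc.le hM.le) hB0.le)
        (mul_nonneg (Real.rpow_nonneg (mfact_real_pos α).le s) (pow_nonneg hu0 _))
    refine (hterm α x ε hε γ).trans (mul_le_mul_of_nonneg_left ?_ hD0)
    refine Finset.prod_le_prod (fun i _ => mul_nonneg (pow_nonneg hu0 _)
      (Real.rpow_nonneg (Nat.cast_nonneg _) _)) (fun i _ => ?_)
    exact key2 hσ hu0 (γ i)
  have hgsum : Summable (fun n : ℕ => (2⁻¹:ℝ) ^ n) :=
    summable_geometric_of_lt_one (by norm_num) (by norm_num)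
  have hgE : ∀ (ε : ℝ), Summable (fun n : ℕ =>
      Real.exp ((2*s-1) * (2*((2:ℝ)^s * ε⁻¹)) ^ (1/(2*s-1))) * (2⁻¹:ℝ) ^ n) := fun ε =>
    hgsum.mul_left _
  have hpi := fun (ε : ℝ) => pi_summable m
    (fun n : ℕ => Real.exp ((2*s-1) * (2*((2:ℝ)^s * ε⁻¹)) ^ (1/(2*s-1))) * (2⁻¹:ℝ) ^ n)
    (fun n => by positivity) (hgE ε)
  have hsummable : ∀ (α : Fin m → ℕ) (x : Fin m → ℝ), ∀ ε ∈ Set.Ioo (0:ℝ) 1,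
      Summable fun γ : Fin m → ℕ =>
        Norm.norm (a γ * (-1 : ℂ) ^ (msize γ) * (((ε ^ (msize γ + msize α) : ℝ) : ℂ))⁻¹ *
          ∫ y : Fin m → ℝ, f γ (x + ε • y) * pdm m (γ + α) φ y) := by
    intro α x ε hε
    refine Summable.of_nonneg_of_le (fun γ => norm_nonneg _) (henvelope α x ε hε) ?_
    exact ((hpi ε).1).mul_left _
  refine ⟨hsummable, 2*(m:ℝ)*(2*s-1)*((2:ℝ)^(s+1)) ^ (1/(2*s-1)), ?_, c * M * B * 2^m, ?_,
    fun α x ε hε => ?_⟩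
  · have hm' : (0:ℝ) < (m:ℝ) := by exact_mod_cast hm
    have : (0:ℝ) < ((2:ℝ)^(s+1)) ^ (1/(2*s-1)) :=
      Real.rpow_pos_of_pos (Real.rpow_pos_of_pos two_pos _) _
    positivity
  · positivity
  · have hεtsum := (hsummable α x ε hε)
    calc Norm.norm (∑' γ : Fin m → ℕ,
          a γ * (-1 : ℂ) ^ (msize γ) * (((ε ^ (msize γ + msize α) : ℝ) : ℂ))⁻¹ *
            ∫ y : Fin m → ℝ, f γ (x + ε • y) * pdm m (γ + α) φ y)
        ≤ ∑' γ : Fin m → ℕ, Norm.norm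
            (a γ * (-1 : ℂ) ^ (msize γ) * (((ε ^ (msize γ + msize α) : ℝ) : ℂ))⁻¹ *
              ∫ y : Fin m → ℝ, f γ (x + ε • y) * pdm m (γ + α) φ y) := by
          refine (norm_tsum_le_tsum_norm ?_).trans_eq (tsum_congr fun γ => rfl)
          simpa using hεtsum
      _ ≤ ∑' γ : Fin m → ℕ,
            (c * M * B * ((mfact α : ℝ) ^ s * ((2:ℝ)^s * ε⁻¹) ^ (msize α))) *
              ∏ i, (Real.exp ((2*s-1) * (2*((2:ℝ)^s * ε⁻¹)) ^ (1/(2*s-1))) * (2⁻¹:ℝ) ^ (γ i)) :=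
          Summable.tsum_le_tsum (henvelope α x ε hε) hεtsum (((hpi ε).1).mul_left _)
      _ = (c * M * B * ((mfact α : ℝ) ^ s * ((2:ℝ)^s * ε⁻¹) ^ (msize α))) *
            (Real.exp ((2*s-1) * (2*((2:ℝ)^s * ε⁻¹)) ^ (1/(2*s-1))) * 2) ^ m := by
          rw [tsum_mul_left, (hpi ε).2]
          congr 2
          rw [tsum_mul_left, tsum_geometric_of_lt_one (by norm_num) (by norm_num)]
          norm_num
      _ ≤ (c * M * B * 2^m) * (mfact α : ℝ) ^ (3*s-1) *
            Real.exp ((2*(m:ℝ)*(2*s-1)*((2:ℝ)^(s+1)) ^ (1/(2*s-1))) * ε ^ (-1/(2*s-1))) :=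
          final_step hm hs hε.1 hc hM hB0 α
end

section
/- Let s > 1 and let (f_ε)_{ε∈(0,1)} be a net of smooth functions on ℝ^m such that for some compact set K ⊆ ℝ^m, ε₁ ∈ (0,1), C₀ > 0 and k₀ > 0: supp f_ε ⊆ K and sup_{x} |f_ε(x)| ≤ C₀·exp(k₀·ε^{−1/(2s-1)}) for all ε ≤ ε₁. Assume that every ξ₀ ∈ ℝ^m \ {0} has an open cone Γ containing ξ₀ and constants C, k₁, k₂ > 0, ε₀ ∈ (0,1) with |f̂_ε(ξ)| ≤ C·exp(k₁·ε^{−1/(2s-1)} − k₂·|ξ|^{1/s}) for all ξ ∈ Γ and ε ≤ ε₀. Then there exist C' > 0, k₁' > 0, k₂' > 0 and ε₀' ∈ (0,1) such that |f̂_ε(ξ)| ≤ C'·exp(k₁'·ε^{−1/(2s-1)} − k₂'·|ξ|^{1/s}) for all ξ ∈ ℝ^m and all ε ≤ ε₀'. (This is the content of: the set of s-singular directions of f is empty if and only if f is a regular generalized Gevrey ultradistribution.) -/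
open MeasureTheory Pointwise

/-- Fourier transform `f̂(ξ) = ∫ e^{-i⟨x,ξ⟩} f(x) dx`. -/
noncomputable def FT (m : ℕ) (f : (Fin m → ℝ) → ℂ) (ξ : Fin m → ℝ) : ℂ :=
  ∫ x : Fin m → ℝ, Complex.exp (-(Complex.I * ((∑ i, x i * ξ i : ℝ) : ℂ))) * f x

/-- if every nonzero direction admits a conic Fourier-decay estimate,
then a single global estimate holds on all of `ℝ^m`. -/
theorem global_decay_of_empty_singular_directions
    (m : ℕ) (hm : 0 < m) (s : ℝ) (hs : 1 < s)
    (f : ℝ → (Fin m → ℝ) → ℂ)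
    (hsm : ∀ ε ∈ Set.Ioo (0:ℝ) 1, ContDiff ℝ (⊤ : ℕ∞) (f ε))
    (K : Set (Fin m → ℝ)) (hK : IsCompact K)
    (ε₁ : ℝ) (hε₁ : ε₁ ∈ Set.Ioo (0:ℝ) 1)
    (hsupp : ∀ ε ∈ Set.Ioo (0:ℝ) 1, ε ≤ ε₁ → tsupport (f ε) ⊆ K)
    (C₀ k₀ : ℝ) (hC₀ : 0 < C₀) (hk₀ : 0 < k₀)
    (hbd : ∀ ε ∈ Set.Ioo (0:ℝ) 1, ε ≤ ε₁ → ∀ x : Fin m → ℝ,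
      ‖f ε x‖ ≤ C₀ * Real.exp (k₀ * ε ^ (-1 / (2 * s - 1))))
    (hdir : ∀ ξ₀ : Fin m → ℝ, ξ₀ ≠ 0 → ∃ Γ : Set (Fin m → ℝ), IsOpen Γ ∧
      (0 : Fin m → ℝ) ∉ Γ ∧ (∀ ξ ∈ Γ, ∀ l : ℝ, 0 < l → l • ξ ∈ Γ) ∧ ξ₀ ∈ Γ ∧
      ∃ C > (0:ℝ), ∃ k₁ > (0:ℝ), ∃ k₂ > (0:ℝ), ∃ ε₀ ∈ Set.Ioo (0:ℝ) 1,
        ∀ ξ ∈ Γ, ∀ ε ∈ Set.Ioo (0:ℝ) 1, ε ≤ ε₀ →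
          ‖FT m (f ε) ξ‖ ≤
            C * Real.exp (k₁ * ε ^ (-1 / (2 * s - 1)) - k₂ * eunorm ξ ^ (1 / s))) :
    ∃ C' > (0:ℝ), ∃ k₁' > (0:ℝ), ∃ k₂' > (0:ℝ), ∃ ε₀' ∈ Set.Ioo (0:ℝ) 1,
      ∀ ξ : Fin m → ℝ, ∀ ε ∈ Set.Ioo (0:ℝ) 1, ε ≤ ε₀' →
        ‖FT m (f ε) ξ‖ ≤
          C' * Real.exp (k₁' * ε ^ (-1 / (2 * s - 1)) - k₂' * eunorm ξ ^ (1 / s)) := by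
  classical
  -- Trivial global bound on the Fourier transform
  set MK : ℝ := (volume K).toReal with hMK
  have hMK0 : 0 ≤ MK := ENNReal.toReal_nonneg
  have htriv : ∀ ε ∈ Set.Ioo (0:ℝ) 1, ε ≤ ε₁ → ∀ ξ : Fin m → ℝ,
      ‖FT m (f ε) ξ‖ ≤ C₀ * Real.exp (k₀ * ε ^ (-1 / (2 * s - 1))) * MK := by
    intro ε hε hεle ξ
    set M : ℝ := C₀ * Real.exp (k₀ * ε ^ (-1 / (2 * s - 1))) with hM
    have hM0 : 0 < M := mul_pos hC₀ (Real.exp_pos _)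
    set g : (Fin m → ℝ) → ℂ :=
      fun x => Complex.exp (-(Complex.I * ((∑ i, x i * ξ i : ℝ) : ℂ))) * f ε x with hg
    have hfc : Continuous (f ε) := (hsm ε hε).continuous
    have hgc : Continuous g := by
      apply Continuous.mul _ hfc
      apply Complex.continuous_exp.comp
      apply Continuous.neg
      apply Continuous.mul continuous_const
      apply Complex.continuous_ofReal.comp
      exact continuous_finset_sum _ (fun i _ => ((continuous_apply i).mul continuous_const))
    have hsub : tsupport g ⊆ K := by
      refine (closure_minimal ?_ (hK.isClosed)).trans (le_refl _)
      intro x hx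
      have hfx : f ε x ≠ 0 := by
        intro h0
        simp [hg, h0] at hx
      exact hsupp ε hε hεle (subset_closure hfx)
    have hgcs : HasCompactSupport g :=
      HasCompactSupport.of_support_subset_isCompact hK
        ((subset_closure).trans hsub)
    have hgi : Integrable g := hgc.integrable_of_hasCompactSupport hgcs
    have habs : ∀ x, ‖g x‖ = ‖f ε x‖ := by
      intro x
      simp [hg, Complex.norm_exp, map_mul]
    have h1 : ‖FT m (f ε) ξ‖ ≤ ∫ x, ‖g x‖ := by
      show ‖FT m (f ε) ξ‖ ≤ _
      exact norm_integral_le_integral_norm g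
    have hKm : MeasurableSet K := hK.isClosed.measurableSet
    have h2 : ∫ x, ‖g x‖ ≤ ∫ x, K.indicator (fun _ => M) x := by
      apply integral_mono hgi.norm
      · exact (integrable_indicator_iff hKm).mpr
          (integrableOn_const hK.measure_lt_top.ne)
      · intro x
        show ‖g x‖ ≤ _
        by_cases hx : x ∈ K
        · rw [habs x, Set.indicator_of_mem hx]
          exact hbd ε hε hεle x
        · rw [Set.indicator_of_notMem hx]
          have hfx : f ε x = 0 := by
            by_contra h0
            exact hx (hsupp ε hε hεle (subset_closure h0))
          simp [habs x, hfx]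
    have h3 : ∫ x, K.indicator (fun _ => M) x = M * MK := by
      rw [integral_indicator_const _ hKm]
      simp [hMK, mul_comm, measureReal_def]
    calc ‖FT m (f ε) ξ‖ ≤ ∫ x, ‖g x‖ := h1
      _ ≤ M * MK := h2.trans_eq h3
  -- cones from the sphere
  set ι := {x : Fin m → ℝ // ‖x‖ = 1} with hι
  have hdir' : ∀ i : ι, ∃ Γ : Set (Fin m → ℝ), IsOpen Γ ∧
      (∀ ξ ∈ Γ, ∀ l : ℝ, 0 < l → l • ξ ∈ Γ) ∧ (i : Fin m → ℝ) ∈ Γ ∧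
      ∃ C > (0:ℝ), ∃ k₁ > (0:ℝ), ∃ k₂ > (0:ℝ), ∃ ε₀ ∈ Set.Ioo (0:ℝ) 1,
        ∀ ξ ∈ Γ, ∀ ε ∈ Set.Ioo (0:ℝ) 1, ε ≤ ε₀ →
          ‖FT m (f ε) ξ‖ ≤
            C * Real.exp (k₁ * ε ^ (-1 / (2 * s - 1)) - k₂ * eunorm ξ ^ (1 / s)) := by
    intro i
    have hne : (i : Fin m → ℝ) ≠ 0 := by
      intro h
      have := i.2
      rw [h] at this
      simp at this
    obtain ⟨Γ, hopen, _, hcone, hmem, rest⟩ := hdir i hne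
    exact ⟨Γ, hopen, hcone, hmem, rest⟩
  choose Γ hopen hcone hmem C hC k₁ hk₁ k₂ hk₂ ε₀ hε₀ hest using hdir'
  -- compactness of the unit sphere
  have hcov : Metric.sphere (0 : Fin m → ℝ) 1 ⊆ ⋃ i : ι, Γ i := by
    intro x hx
    have hx1 : ‖x‖ = 1 := by rwa [mem_sphere_zero_iff_norm] at hx
    exact Set.mem_iUnion.mpr ⟨⟨x, hx1⟩, hmem ⟨x, hx1⟩⟩
  obtain ⟨t, ht⟩ := (isCompact_sphere (0 : Fin m → ℝ) 1).elim_finite_subcover Γ hopen hcov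
  -- t is nonempty
  haveI : Nonempty (Fin m) := ⟨⟨0, hm⟩⟩
  have hsne : ((fun _ => (1:ℝ)) : Fin m → ℝ) ∈ Metric.sphere (0 : Fin m → ℝ) 1 := by
    rw [mem_sphere_zero_iff_norm]
    exact norm_one
  have htne : t.Nonempty := by
    obtain ⟨i, hi, -⟩ := Set.mem_iUnion₂.mp (ht hsne)
    exact ⟨i, hi⟩
  -- the constants
  set Cs : ℝ := t.sup' htne C with hCs
  set k₁s : ℝ := t.sup' htne k₁ with hk₁s
  set k₂s : ℝ := t.inf' htne k₂ with hk₂s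
  set εs : ℝ := t.inf' htne ε₀ with hεs
  have hCs0 : 0 < Cs := by
    obtain ⟨i, hi⟩ := htne
    exact lt_of_lt_of_le (hC i) (Finset.le_sup' C hi)
  have hk₁s0 : k₀ ≤ max k₁s k₀ := le_max_right _ _
  have hk₂s0 : 0 < k₂s := by
    rw [hk₂s, Finset.lt_inf'_iff]
    exact fun i _ => hk₂ i
  have hεs0 : 0 < εs := by
    rw [hεs, Finset.lt_inf'_iff]
    exact fun i hi => (hε₀ i).1
  have hεs1 : εs ≤ 1 := by
    obtain ⟨i, hi⟩ := htne
    exact (Finset.inf'_le ε₀ hi).trans (hε₀ i).2.le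
  refine ⟨max Cs (C₀ * MK), lt_max_of_lt_left hCs0, max k₁s k₀,
    lt_of_lt_of_le hk₀ hk₁s0, k₂s, hk₂s0, min εs ε₁,
    ⟨lt_min hεs0 hε₁.1, lt_of_le_of_lt (min_le_right _ _) hε₁.2⟩, ?_⟩
  intro ξ ε hε hεle
  have hεε₁ : ε ≤ ε₁ := hεle.trans (min_le_right _ _)
  have hA0 : 0 ≤ ε ^ (-1 / (2 * s - 1)) := Real.rpow_nonneg hε.1.le _
  have hB0 : 0 ≤ eunorm ξ ^ (1 / s) := Real.rpow_nonneg (Real.sqrt_nonneg _) _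
  by_cases hξ : ξ = 0
  · -- zero frequency: use trivial bound
    have h0 : eunorm ξ = 0 := by
      simp [hξ, eunorm]
    have hs0 : (1 : ℝ) / s ≠ 0 := by positivity
    rw [h0, Real.zero_rpow hs0]
    calc ‖FT m (f ε) ξ‖
        ≤ C₀ * Real.exp (k₀ * ε ^ (-1 / (2 * s - 1))) * MK := htriv ε hε hεε₁ ξ
      _ = (C₀ * MK) * Real.exp (k₀ * ε ^ (-1 / (2 * s - 1))) := by ring
      _ ≤ max Cs (C₀ * MK) * Real.exp (max k₁s k₀ * ε ^ (-1 / (2 * s - 1)) - k₂s * 0) := by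
          apply mul_le_mul (le_max_right _ _)
          · rw [Real.exp_le_exp]
            rw [mul_zero, sub_zero]
            exact mul_le_mul_of_nonneg_right hk₁s0 hA0
          · exact (Real.exp_pos _).le
          · exact le_trans hCs0.le (le_max_left _ _)
  · -- nonzero frequency: locate in a cone of the finite cover
    have hξn : (0:ℝ) < ‖ξ‖ := norm_pos_iff.mpr hξ
    have hu1 : ‖(‖ξ‖⁻¹ • ξ)‖ = 1 := by
      rw [norm_smul, norm_inv, norm_norm, inv_mul_cancel₀ hξn.ne']
    have hu : ‖ξ‖⁻¹ • ξ ∈ Metric.sphere (0 : Fin m → ℝ) 1 :=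
      mem_sphere_zero_iff_norm.mpr hu1
    obtain ⟨i, hi, hui⟩ := Set.mem_iUnion₂.mp (ht hu)
    have hξΓ : ξ ∈ Γ i := by
      have := hcone i _ hui ‖ξ‖ hξn
      rwa [smul_smul, mul_inv_cancel₀ hξn.ne', one_smul] at this
    have hεi : ε ≤ ε₀ i := le_trans hεle ((min_le_left _ _).trans (Finset.inf'_le ε₀ hi))
    calc ‖FT m (f ε) ξ‖
        ≤ C i * Real.exp (k₁ i * ε ^ (-1 / (2 * s - 1)) - k₂ i * eunorm ξ ^ (1 / s)) :=
          hest i ξ hξΓ ε hε hεi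
      _ ≤ max Cs (C₀ * MK) *
          Real.exp (max k₁s k₀ * ε ^ (-1 / (2 * s - 1)) - k₂s * eunorm ξ ^ (1 / s)) := by
          apply mul_le_mul
          · exact le_trans (Finset.le_sup' C hi) (le_max_left _ _)
          · rw [Real.exp_le_exp]
            apply sub_le_sub
            · exact mul_le_mul_of_nonneg_right
                (le_trans (Finset.le_sup' k₁ hi) (le_max_left _ _)) hA0
            · exact mul_le_mul_of_nonneg_right (Finset.inf'_le k₂ hi) hB0
          · exact (Real.exp_pos _).le
          · exact le_trans hCs0.le (le_max_left _ _)
end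

section
/- Let s > 1 and let F : ℝ^m → ℂ. Suppose there exist c₁, k₁, k₂ > 0 such that for every k₃ > 0 there exist c' > 0 and η ∈ (0,1) with |F(ξ)| ≤ c'·exp(−k₃·ε^{−1/(2s-1)}) + c₁·exp(k₁·ε^{−1/(2s-1)} − k₂·|ξ|^{1/s}) for all ξ ∈ ℝ^m and all ε ∈ (0, η]. Then there exist c > 0 and δ > 0 such that |F(ξ)| ≤ c·exp(−δ·|ξ|^{1/s}) for all ξ ∈ ℝ^m. (This trading of ε-decay for ξ-decay, obtained by choosing ε = (k₁/((k₂−r)|ξ|^{1/s}))^{2s-1} for r ∈ (0,k₂), is the key step in proving that a compactly supported Gevrey ultradistribution of order 3s−1 which is a regular generalized Gevrey ultradistribution is a compactly supported Gevrey function of order s, i.e. G^{s,∞}(Ω) ∩ E'_{3s-1}(Ω) = D^s(Ω).) -/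
open MeasureTheory Pointwise

/-- trading `ε`-decay for `ξ`-decay: the key step in the proof of
`G^{s,∞}(Ω) ∩ E'_{3s-1}(Ω) = D^s(Ω)`. -/
theorem trade_epsilon_decay_for_xi_decay (m : ℕ) (hm : 0 < m) (s : ℝ) (hs : 1 < s)
    (F : (Fin m → ℝ) → ℂ)
    (hyp : ∃ c₁ > (0:ℝ), ∃ k₁ > (0:ℝ), ∃ k₂ > (0:ℝ), ∀ k₃ > (0:ℝ),
      ∃ c' > (0:ℝ), ∃ η ∈ Set.Ioo (0:ℝ) 1, ∀ ξ : Fin m → ℝ, ∀ ε : ℝ, 0 < ε → ε ≤ η →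
        ‖F ξ‖ ≤ c' * Real.exp (-k₃ * ε ^ (-1 / (2 * s - 1))) +
          c₁ * Real.exp (k₁ * ε ^ (-1 / (2 * s - 1)) - k₂ * eunorm ξ ^ (1 / s))) :
    ∃ c > (0:ℝ), ∃ δ > (0:ℝ), ∀ ξ : Fin m → ℝ,
      ‖F ξ‖ ≤ c * Real.exp (-δ * eunorm ξ ^ (1 / s)) := by
  obtain ⟨c₁, hc₁, k₁, hk₁, k₂, hk₂, hyp⟩ := hyp
  obtain ⟨c', hc', η, hη, H⟩ := hyp 1 one_pos
  have hα0 : (0:ℝ) < 2 * s - 1 := by linarith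
  set T₀ : ℝ := η ^ (-1 / (2 * s - 1)) with hT₀def
  have hT0 : 0 < T₀ := Real.rpow_pos_of_pos hη.1 _
  set δ : ℝ := min (k₂ / (2 * k₁)) (k₂ / 2) with hδdef
  have hδ0 : 0 < δ := lt_min (by positivity) (by positivity)
  have hδ1 : δ ≤ k₂ / (2 * k₁) := min_le_left _ _
  have hδ2 : δ ≤ k₂ / 2 := min_le_right _ _
  refine ⟨c' + c₁ * Real.exp (k₁ * T₀), by positivity, δ, hδ0, ?_⟩
  intro ξ
  set u : ℝ := eunorm ξ ^ (1 / s) with hudef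
  have hu0 : 0 ≤ u := Real.rpow_nonneg (Real.sqrt_nonneg _) _
  set t : ℝ := max T₀ (k₂ / (2 * k₁) * u) with htdef
  have ht0 : 0 < t := lt_of_lt_of_le hT0 (le_max_left _ _)
  have htT : T₀ ≤ t := le_max_left _ _
  have htu : k₂ / (2 * k₁) * u ≤ t := le_max_right _ _
  set ε : ℝ := t ^ (-(2 * s - 1)) with hεdef
  have hε0 : 0 < ε := Real.rpow_pos_of_pos ht0 _
  have hεt : ε ^ (-1 / (2 * s - 1)) = t := by
    rw [hεdef, ← Real.rpow_mul ht0.le]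
    rw [show (-(2 * s - 1)) * (-1 / (2 * s - 1)) = 1 by field_simp]
    exact Real.rpow_one t
  have hεη : ε ≤ η := by
    have h1 : t ^ (-(2 * s - 1)) ≤ T₀ ^ (-(2 * s - 1)) :=
      Real.rpow_le_rpow_of_nonpos hT0 htT (by linarith)
    have h2 : T₀ ^ (-(2 * s - 1)) = η := by
      rw [hT₀def, ← Real.rpow_mul hη.1.le]
      rw [show (-1 / (2 * s - 1)) * (-(2 * s - 1)) = 1 by field_simp]
      exact Real.rpow_one η
    rw [hεdef]; linarith
  have key := H ξ ε hε0 hεη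
  rw [hεt] at key
  have hb1 : c' * Real.exp (-1 * t) ≤ c' * Real.exp (-δ * u) := by
    have h1 : δ * u ≤ t := le_trans (by nlinarith) htu
    exact mul_le_mul_of_nonneg_left (Real.exp_le_exp.mpr (by linarith)) hc'.le
  have hb2 : c₁ * Real.exp (k₁ * t - k₂ * u) ≤
      c₁ * Real.exp (k₁ * T₀) * Real.exp (-δ * u) := by
    rw [mul_assoc, ← Real.exp_add]
    have hfs : k₁ * (k₂ / (2 * k₁) * u) = k₂ / 2 * u := by field_simp
    have h2 : k₁ * t - k₂ * u ≤ k₁ * T₀ + -δ * u := by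
      rcases max_cases T₀ (k₂ / (2 * k₁) * u) with ⟨h, _⟩ | ⟨h, _⟩ <;>
        rw [htdef, h] <;> nlinarith
    exact mul_le_mul_of_nonneg_left (Real.exp_le_exp.mpr h2) hc₁.le
  calc ‖F ξ‖ ≤ _ := key
    _ ≤ c' * Real.exp (-δ * u) + c₁ * Real.exp (k₁ * T₀) * Real.exp (-δ * u) :=
        add_le_add hb1 hb2
    _ = (c' + c₁ * Real.exp (k₁ * T₀)) * Real.exp (-δ * u) := by ring
end
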